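/- arXiv:2506.12534 — 4 statements merged into one kernel-verified Lean document; each statement's English description precedes it below -/
import Mathlib

section
/- Let E = EuclideanSpace ℝ (Fin n), ξ ∈ E with ‖ξ‖ = 1, and μ a Borel probability measure on E satisfying the standing integrability assumption whose topological support is not contained in any affine line {p + tξ : t ∈ ℝ} (p ∈ E). Let (β_m) be a sequence in [0, 1) converging to 1 and, for each m, let q_m ∈ E be a minimizer of G_{β_m ξ}. Then q_m/‖q_m‖ → ξ as m → ∞ (with the convention that q_m/‖q_m‖ = 0 if q_m = 0, which occurs for at most finitely many m). (The Euclidean direction statement proved in the remark following Theorem 6.1, recovering Girard–Stupfler's Theorem 2.1 without the non-atomicity assumption.) -/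
open MeasureTheory Filter Topology

/-- The data-based geometric quantile loss in Euclidean space:
`ρ_u(x,p) = ‖p − x‖ − ⟪u, p − x⟫`. -/
noncomputable def quantileLoss {n : ℕ} (u x p : EuclideanSpace ℝ (Fin n)) : ℝ :=
  ‖p - x‖ - inner ℝ u (p - x)

/-- The topological support of a measure: points all of whose neighbourhoods have
positive measure. -/
def measSupport {α : Type*} [TopologicalSpace α] [MeasurableSpace α]
    (μ : Measure α) : Set α :=
  {x | ∀ U ∈ nhds x, μ U ≠ 0}

section Aux

variable {n : ℕ}

lemma ql_continuous (u p : EuclideanSpace ℝ (Fin n)) :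
    Continuous fun x => quantileLoss u x p := by
  unfold quantileLoss
  exact (continuous_const.sub continuous_id).norm.sub
    (continuous_const.inner (continuous_const.sub continuous_id))

lemma ql_ge (u x p : EuclideanSpace ℝ (Fin n)) :
    (1 - ‖u‖) * ‖p - x‖ ≤ quantileLoss u x p := by
  have h := real_inner_le_norm u (p - x)
  unfold quantileLoss
  nlinarith [norm_nonneg (p - x), norm_nonneg u]

lemma ql_abs_le (u x p : EuclideanSpace ℝ (Fin n)) :
    |quantileLoss u x p| ≤ (1 + ‖u‖) * (‖p‖ + ‖x‖) := by
  have h1 := abs_real_inner_le_norm u (p - x)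
  have h2 : ‖p - x‖ ≤ ‖p‖ + ‖x‖ := norm_sub_le p x
  have h3 : |quantileLoss u x p| ≤ ‖p - x‖ + |(inner ℝ u (p - x) : ℝ)| := by
    unfold quantileLoss
    calc |‖p - x‖ - (inner ℝ u (p - x) : ℝ)| ≤ |‖p - x‖| + |(inner ℝ u (p - x) : ℝ)| :=
          abs_sub _ _
      _ = ‖p - x‖ + |(inner ℝ u (p - x) : ℝ)| := by rw [abs_of_nonneg (norm_nonneg _)]
  nlinarith [norm_nonneg u, norm_nonneg x, norm_nonneg p, norm_nonneg (p - x)]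

lemma ql_integrable (μ : Measure (EuclideanSpace ℝ (Fin n))) [IsFiniteMeasure μ]
    (hX : Integrable (fun x => ‖x‖) μ) (u p : EuclideanSpace ℝ (Fin n)) :
    Integrable (fun x => quantileLoss u x p) μ := by
  have hg : Integrable (fun x => (1 + ‖u‖) * (‖p‖ + ‖x‖)) μ :=
    ((integrable_const _).add hX).const_mul _
  refine hg.mono' (ql_continuous u p).aestronglyMeasurable (ae_of_all _ fun x => ?_)
  rw [Real.norm_eq_abs]
  exact ql_abs_le u x p

end Aux

set_option maxHeartbeats 1000000 in
/-- The Euclidean direction statement from the remark after Theorem 6.1 (recovering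
Girard–Stupfler without non-atomicity): along `β_m → 1⁻`, `q_m/‖q_m‖ → ξ`
(with the convention `q_m/‖q_m‖ = 0` when `q_m = 0`, built into `‖q_m‖⁻¹ • q_m`). -/
theorem extreme_quantiles_normalized_tendsto_direction
    {n : ℕ} (μ : Measure (EuclideanSpace ℝ (Fin n))) [IsProbabilityMeasure μ]
    (hμint : ∃ (u₀ p₀ : EuclideanSpace ℝ (Fin n)), ‖u₀‖ < 1 ∧
      Integrable (fun x => quantileLoss u₀ x p₀) μ)
    (ξ : EuclideanSpace ℝ (Fin n)) (hξ : ‖ξ‖ = 1)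
    (hsupp : ¬ ∃ p : EuclideanSpace ℝ (Fin n),
      measSupport μ ⊆ {y | ∃ t : ℝ, y = p + t • ξ})
    (β : ℕ → ℝ) (hβ : ∀ m, β m ∈ Set.Ico (0 : ℝ) 1)
    (hβlim : Tendsto β atTop (nhds 1))
    (q : ℕ → EuclideanSpace ℝ (Fin n))
    (hq : ∀ m, ∀ p, ∫ x, quantileLoss (β m • ξ) x (q m) ∂μ
        ≤ ∫ x, quantileLoss (β m • ξ) x p ∂μ) :
    Tendsto (fun m => ‖q m‖⁻¹ • q m) atTop (nhds ξ) := by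
  classical
  obtain ⟨u₀, p₀, hu₀, hint⟩ := hμint
  -- Integrability of ‖x‖
  have hc0 : (0 : ℝ) < 1 - ‖u₀‖ := by linarith
  have hP : Integrable (fun x => ‖p₀ - x‖) μ := by
    refine (hint.const_mul (1 - ‖u₀‖)⁻¹).mono'
      ((continuous_const.sub continuous_id).norm.aestronglyMeasurable)
      (ae_of_all _ fun x => ?_)
    have h1 := ql_ge u₀ x p₀
    have h2 : 0 ≤ quantileLoss u₀ x p₀ := le_trans (by positivity) h1
    rw [Real.norm_eq_abs, abs_of_nonneg (norm_nonneg _)]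
    rw [← mul_le_mul_iff_right₀ hc0]
    calc (1 - ‖u₀‖) * ‖p₀ - x‖ ≤ quantileLoss u₀ x p₀ := h1
      _ = (1 - ‖u₀‖) * ((1 - ‖u₀‖)⁻¹ * quantileLoss u₀ x p₀) := by
          field_simp
  have hX : Integrable (fun x : EuclideanSpace ℝ (Fin n) => ‖x‖) μ := by
    refine (hP.add (integrable_const ‖p₀‖)).mono'
      continuous_norm.aestronglyMeasurable (ae_of_all _ fun x => ?_)
    rw [Real.norm_eq_abs, abs_of_nonneg (norm_nonneg _)]
    calc ‖x‖ = ‖(x - p₀) + p₀‖ := by rw [sub_add_cancel]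
      _ ≤ ‖x - p₀‖ + ‖p₀‖ := norm_add_le _ _
      _ = ‖p₀ - x‖ + ‖p₀‖ := by rw [norm_sub_rev]
  set M : ℝ := ∫ x, ‖x‖ ∂μ with hM
  have hM0 : 0 ≤ M := integral_nonneg fun x => norm_nonneg x
  have hQL : ∀ (u p : EuclideanSpace ℝ (Fin n)), Integrable (fun x => quantileLoss u x p) μ :=
    fun u p => ql_integrable μ hX u p
  -- integral of a constant
  have hIconst : ∀ c : ℝ, ∫ _x, c ∂μ = c := fun c => by
    simp [integral_const, measure_univ]
  -- Lower bound
  have hlow : ∀ b : ℝ, 0 ≤ b → b ≤ 1 → ∀ p : EuclideanSpace ℝ (Fin n), p ≠ 0 →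
      ‖p‖ * (1 - b * inner ℝ ξ (‖p‖⁻¹ • p)) - 2 * M
        ≤ ∫ x, quantileLoss (b • ξ) x p ∂μ := by
    intro b hb0 hb1 p hp
    have hpn : (0 : ℝ) < ‖p‖ := norm_pos_iff.mpr hp
    set w : EuclideanSpace ℝ (Fin n) := ‖p‖⁻¹ • p with hw
    have hwn : ‖w‖ = 1 := by
      rw [hw, norm_smul, norm_inv, norm_norm, inv_mul_cancel₀ (ne_of_gt hpn)]
    have hpt : ∀ x : EuclideanSpace ℝ (Fin n), ‖p‖ * (1 - b * inner ℝ ξ w) - 2 * ‖x‖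
        ≤ quantileLoss (b • ξ) x p := by
      intro x
      have h1 : (inner ℝ w (p - x) : ℝ) ≤ ‖p - x‖ := by
        have := real_inner_le_norm w (p - x)
        rwa [hwn, one_mul] at this
      have h2 : (inner ℝ w p : ℝ) = ‖p‖ := by
        rw [hw, real_inner_smul_left, real_inner_self_eq_norm_sq]
        field_simp
      have h4 : (inner ℝ ξ p : ℝ) = ‖p‖ * inner ℝ ξ w := by
        rw [hw, real_inner_smul_right]
        field_simp
      have h5 : |(inner ℝ w x : ℝ)| ≤ ‖x‖ := by
        have := abs_real_inner_le_norm w x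
        rwa [hwn, one_mul] at this
      have h6 : |(inner ℝ ξ x : ℝ)| ≤ ‖x‖ := by
        have := abs_real_inner_le_norm ξ x
        rwa [hξ, one_mul] at this
      have hexp : quantileLoss (b • ξ) x p
          = ‖p - x‖ - b * ((inner ℝ ξ p : ℝ) - inner ℝ ξ x) := by
        unfold quantileLoss
        rw [real_inner_smul_left, inner_sub_right]
      have hws : (inner ℝ w (p - x) : ℝ) = ‖p‖ - inner ℝ w x := by
        rw [inner_sub_right, h2]
      rw [hexp, h4]
      rw [abs_le] at h5 h6
      nlinarith [h5.1, h5.2, h6.1, h6.2, hb0, hb1, h1, hws]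
    have hle : ∫ x, (‖p‖ * (1 - b * inner ℝ ξ w) - 2 * ‖x‖) ∂μ
        ≤ ∫ x, quantileLoss (b • ξ) x p ∂μ := by
      refine integral_mono ((integrable_const _).sub (hX.const_mul 2)) (hQL _ _) hpt
    calc ‖p‖ * (1 - b * inner ℝ ξ w) - 2 * M
        = ∫ x, (‖p‖ * (1 - b * inner ℝ ξ w) - 2 * ‖x‖) ∂μ := by
          rw [integral_sub (integrable_const _) (hX.const_mul 2), hIconst,
            integral_const_mul]
      _ ≤ _ := hle
  -- Upper bound along the axis
  have hup : ∀ b : ℝ, 0 ≤ b → b ≤ 1 → ∀ t : ℝ, 0 ≤ t →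
      ∫ x, quantileLoss (b • ξ) x (t • ξ) ∂μ ≤ t * (1 - b) + 2 * M := by
    intro b hb0 hb1 t ht
    have hpt : ∀ x : EuclideanSpace ℝ (Fin n), quantileLoss (b • ξ) x (t • ξ) ≤ t * (1 - b) + 2 * ‖x‖ := by
      intro x
      have h1 : ‖t • ξ - x‖ ≤ t + ‖x‖ := by
        calc ‖t • ξ - x‖ ≤ ‖t • ξ‖ + ‖x‖ := norm_sub_le _ _
          _ = t + ‖x‖ := by rw [norm_smul, Real.norm_eq_abs, abs_of_nonneg ht, hξ, mul_one]
      have h2 : (inner ℝ ξ (t • ξ) : ℝ) = t := by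
        rw [real_inner_smul_right, real_inner_self_eq_norm_sq, hξ]
        ring
      have h6 : |(inner ℝ ξ x : ℝ)| ≤ ‖x‖ := by
        have := abs_real_inner_le_norm ξ x
        rwa [hξ, one_mul] at this
      have hexp : quantileLoss (b • ξ) x (t • ξ)
          = ‖t • ξ - x‖ - b * (t - inner ℝ ξ x) := by
        unfold quantileLoss
        rw [real_inner_smul_left, inner_sub_right, h2]
      rw [abs_le] at h6
      rw [hexp]
      nlinarith [h6.1, h6.2]
    calc ∫ x, quantileLoss (b • ξ) x (t • ξ) ∂μ
        ≤ ∫ x, (t * (1 - b) + 2 * ‖x‖) ∂μ :=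
          integral_mono (hQL _ _) ((integrable_const _).add (hX.const_mul 2)) hpt
      _ = t * (1 - b) + 2 * M := by
          rw [integral_add (integrable_const _) (hX.const_mul 2), hIconst,
            integral_const_mul]
  -- Transfer between β and 1
  have htrans : ∀ b : ℝ, 0 ≤ b → b ≤ 1 → ∀ p : EuclideanSpace ℝ (Fin n),
      |(∫ x, quantileLoss (b • ξ) x p ∂μ) - ∫ x, quantileLoss ξ x p ∂μ|
        ≤ (1 - b) * (‖p‖ + M) := by
    intro b hb0 hb1 p
    have hdiff : (∫ x, quantileLoss (b • ξ) x p ∂μ) - ∫ x, quantileLoss ξ x p ∂μ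
        = ∫ x, (quantileLoss (b • ξ) x p - quantileLoss ξ x p) ∂μ :=
      (integral_sub (hQL _ _) (hQL _ _)).symm
    rw [hdiff]
    have h1 : |∫ x, (quantileLoss (b • ξ) x p - quantileLoss ξ x p) ∂μ|
        ≤ ∫ x, |quantileLoss (b • ξ) x p - quantileLoss ξ x p| ∂μ := by
      have := norm_integral_le_integral_norm
        (fun x => quantileLoss (b • ξ) x p - quantileLoss ξ x p) (μ := μ)
      simpa [Real.norm_eq_abs] using this
    refine h1.trans ?_
    have hpt : ∀ x : EuclideanSpace ℝ (Fin n), |quantileLoss (b • ξ) x p - quantileLoss ξ x p|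
        ≤ (1 - b) * (‖p‖ + ‖x‖) := by
      intro x
      have hexp : quantileLoss (b • ξ) x p - quantileLoss ξ x p
          = (1 - b) * (inner ℝ ξ (p - x) : ℝ) := by
        unfold quantileLoss
        rw [real_inner_smul_left]
        ring
      rw [hexp, abs_mul, abs_of_nonneg (by linarith : (0:ℝ) ≤ 1 - b)]
      have h6 : |(inner ℝ ξ (p - x) : ℝ)| ≤ ‖p‖ + ‖x‖ := by
        have h := abs_real_inner_le_norm ξ (p - x)
        rw [hξ, one_mul] at h
        exact h.trans (norm_sub_le _ _)
      nlinarith [abs_nonneg (inner ℝ ξ (p - x) : ℝ)]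
    calc ∫ x, |quantileLoss (b • ξ) x p - quantileLoss ξ x p| ∂μ
        ≤ ∫ x, (1 - b) * (‖p‖ + ‖x‖) ∂μ := by
          refine integral_mono ((hQL _ _).sub (hQL _ _)).abs
            (((integrable_const _).add hX).const_mul _) hpt
      _ = (1 - b) * (‖p‖ + M) := by
          rw [integral_const_mul, integral_add (integrable_const _) hX, hIconst]
  -- Positivity of G_ξ
  have hpos : ∀ p : EuclideanSpace ℝ (Fin n), 0 < ∫ x, quantileLoss ξ x p ∂μ := by
    intro p
    have hnn : ∀ x : EuclideanSpace ℝ (Fin n), 0 ≤ quantileLoss ξ x p := by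
      intro x
      have := ql_ge ξ x p
      rw [hξ] at this
      simpa using this
    have h0 : 0 ≤ ∫ x, quantileLoss ξ x p ∂μ := integral_nonneg hnn
    rcases h0.lt_or_eq with h | h
    · exact h
    · exfalso
      have hae : (fun x => quantileLoss ξ x p) =ᵐ[μ] 0 :=
        (integral_eq_zero_iff_of_nonneg hnn (hQL ξ p)).mp h.symm
      set S : Set (EuclideanSpace ℝ (Fin n)) := {x | quantileLoss ξ x p = 0} with hS
      have hSclosed : IsClosed S :=
        isClosed_eq (ql_continuous ξ p) continuous_const
      have hScompl : μ Sᶜ = 0 := by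
        have := hae
        rw [Filter.EventuallyEq, ae_iff] at this
        simpa [hS, Set.compl_setOf] using this
      refine hsupp ⟨p, fun x hx => ?_⟩
      have hxS : x ∈ S := by
        by_contra hxS
        exact hx Sᶜ (hSclosed.isOpen_compl.mem_nhds hxS) hScompl
      -- from quantileLoss ξ x p = 0 deduce x on the line
      have heq : (inner ℝ ξ (p - x) : ℝ) = ‖ξ‖ * ‖p - x‖ := by
        have : ‖p - x‖ - (inner ℝ ξ (p - x) : ℝ) = 0 := hxS
        rw [hξ, one_mul]
        linarith
      have := inner_eq_norm_mul_iff_real.mp heq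
      rw [hξ, one_smul] at this
      refine ⟨-‖p - x‖, ?_⟩
      rw [neg_smul, this]
      abel
  -- G_ξ along the axis tends to 0
  have hnull : Tendsto (fun k : ℕ => ∫ x, quantileLoss ξ x ((k : ℝ) • ξ) ∂μ)
      atTop (𝓝 0) := by
    have h := tendsto_integral_of_dominated_convergence (μ := μ)
      (F := fun k : ℕ => fun x : EuclideanSpace ℝ (Fin n) => quantileLoss ξ x ((k : ℝ) • ξ))
      (f := fun _ : EuclideanSpace ℝ (Fin n) => (0 : ℝ)) (fun x => 2 * ‖x‖)
      (fun k => (ql_continuous ξ _).aestronglyMeasurable)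
      (hX.const_mul 2)
      ?_ ?_
    · simpa using h
    · intro k
      refine ae_of_all _ fun x => ?_
      have hnn : 0 ≤ quantileLoss ξ x ((k : ℝ) • ξ) := by
        have := ql_ge ξ x ((k : ℝ) • ξ)
        rw [hξ] at this
        simpa using this
      have h1 : ‖(k : ℝ) • ξ - x‖ ≤ (k : ℝ) + ‖x‖ := by
        calc ‖(k : ℝ) • ξ - x‖ ≤ ‖(k : ℝ) • ξ‖ + ‖x‖ := norm_sub_le _ _
          _ = (k : ℝ) + ‖x‖ := by
            rw [norm_smul, Real.norm_eq_abs, abs_of_nonneg (Nat.cast_nonneg k), hξ, mul_one]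
      have h2 : (inner ℝ ξ ((k : ℝ) • ξ) : ℝ) = (k : ℝ) := by
        rw [real_inner_smul_right, real_inner_self_eq_norm_sq, hξ]
        ring
      have h6 : |(inner ℝ ξ x : ℝ)| ≤ ‖x‖ := by
        have := abs_real_inner_le_norm ξ x
        rwa [hξ, one_mul] at this
      have hexp : quantileLoss ξ x ((k : ℝ) • ξ)
          = ‖(k : ℝ) • ξ - x‖ - (k : ℝ) + (inner ℝ ξ x : ℝ) := by
        unfold quantileLoss
        rw [inner_sub_right, h2]
        ring
      rw [abs_le] at h6
      rw [Real.norm_eq_abs, abs_of_nonneg hnn, hexp]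
      show ‖(k : ℝ) • ξ - x‖ - (k : ℝ) + (inner ℝ ξ x : ℝ) ≤ 2 * ‖x‖
      linarith [h6.1, h6.2, h1]
    · refine ae_of_all _ fun x => ?_
      -- pointwise convergence to 0
      have hnn : ∀ k : ℕ, 0 ≤ quantileLoss ξ x ((k : ℝ) • ξ) := by
        intro k
        have := ql_ge ξ x ((k : ℝ) • ξ)
        rw [hξ] at this
        simpa using this
      have hbound : ∀ k : ℕ, ‖x‖ < (k : ℝ) →
          quantileLoss ξ x ((k : ℝ) • ξ) ≤ ‖x‖ ^ 2 / (2 * ((k : ℝ) - ‖x‖)) := by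
        intro k hk
        set t : ℝ := (k : ℝ)
        set a : ℝ := (inner ℝ ξ x : ℝ)
        have h6 : |a| ≤ ‖x‖ := by
          have := abs_real_inner_le_norm ξ x
          rwa [hξ, one_mul] at this
        rw [abs_le] at h6
        have hta : 0 < t - a := by nlinarith [norm_nonneg x]
        have hsq : ‖t • ξ - x‖ ^ 2 = t ^ 2 - 2 * t * a + ‖x‖ ^ 2 := by
          rw [norm_sub_sq_real, norm_smul, Real.norm_eq_abs, real_inner_smul_left]
          have : |t| = t := abs_of_nonneg (by positivity)
          rw [this, hξ]
          ring
        have hkey : ‖t • ξ - x‖ ≤ (t - a) + ‖x‖ ^ 2 / (2 * (t - a)) := by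
          have hrhs : 0 ≤ (t - a) + ‖x‖ ^ 2 / (2 * (t - a)) := by positivity
          have h2 : ‖t • ξ - x‖ ^ 2 ≤ ((t - a) + ‖x‖ ^ 2 / (2 * (t - a))) ^ 2 := by
            rw [hsq]
            have hexpand : ((t - a) + ‖x‖ ^ 2 / (2 * (t - a))) ^ 2
                = (t - a) ^ 2 + ‖x‖ ^ 2 + (‖x‖ ^ 2 / (2 * (t - a))) ^ 2 := by
              field_simp
              ring
            rw [hexpand]
            nlinarith [sq_nonneg (‖x‖ ^ 2 / (2 * (t - a))), sq_nonneg a]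
          exact (pow_le_pow_iff_left₀ (norm_nonneg _) hrhs (by norm_num)).mp h2
        have hexp : quantileLoss ξ x (t • ξ) = ‖t • ξ - x‖ - t + a := by
          unfold quantileLoss
          rw [inner_sub_right, real_inner_smul_right, real_inner_self_eq_norm_sq, hξ]
          ring
        have hmono : ‖x‖ ^ 2 / (2 * (t - a)) ≤ ‖x‖ ^ 2 / (2 * (t - ‖x‖)) := by
          apply div_le_div_of_nonneg_left (by positivity) (by linarith) (by linarith [h6.2])
        rw [hexp]
        linarith [hkey, hmono]
      refine squeeze_zero' (g := fun k : ℕ => ‖x‖ ^ 2 / (2 * ((k : ℝ) - ‖x‖)))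
        (Filter.Eventually.of_forall hnn) ?_ ?_
      · filter_upwards [eventually_gt_atTop (⌈‖x‖⌉₊)] with k hk
        have hxk : ‖x‖ < (k : ℝ) := lt_of_le_of_lt (Nat.le_ceil _) (by exact_mod_cast hk)
        exact hbound k hxk
      · have hden : Tendsto (fun k : ℕ => 2 * ((k : ℝ) - ‖x‖)) atTop atTop := by
          apply Tendsto.const_mul_atTop (by norm_num : (0:ℝ) < 2)
          exact tendsto_atTop_add_const_right _ _ tendsto_natCast_atTop_atTop
        exact Tendsto.div_atTop tendsto_const_nhds hden
  -- Divergence of ‖q m‖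
  have hGcont : Continuous fun p : EuclideanSpace ℝ (Fin n) => ∫ x, quantileLoss ξ x p ∂μ := by
    rw [Metric.continuous_iff]
    intro p ε hε
    refine ⟨ε / 2, by linarith, fun p' hp' => ?_⟩
    have hpt : ∀ x : EuclideanSpace ℝ (Fin n), |quantileLoss ξ x p' - quantileLoss ξ x p| ≤ 2 * dist p' p := by
      intro x
      have hexp : quantileLoss ξ x p' - quantileLoss ξ x p
          = (‖p' - x‖ - ‖p - x‖) - (inner ℝ ξ (p' - p) : ℝ) := by
        have hinner : (inner ℝ ξ (p' - p) : ℝ)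
            = (inner ℝ ξ (p' - x) : ℝ) - (inner ℝ ξ (p - x) : ℝ) := by
          rw [← inner_sub_right]
          congr 1
          abel
        unfold quantileLoss
        rw [hinner]
        ring
      have h1 : |‖p' - x‖ - ‖p - x‖| ≤ ‖p' - p‖ := by
        have h := abs_norm_sub_norm_le (p' - x) (p - x)
        have he : p' - x - (p - x) = p' - p := by abel
        rwa [he] at h
      have h2 : |(inner ℝ ξ (p' - p) : ℝ)| ≤ ‖p' - p‖ := by
        have := abs_real_inner_le_norm ξ (p' - p)
        rwa [hξ, one_mul] at this
      rw [hexp, dist_eq_norm]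
      calc |‖p' - x‖ - ‖p - x‖ - (inner ℝ ξ (p' - p) : ℝ)|
          ≤ |‖p' - x‖ - ‖p - x‖| + |(inner ℝ ξ (p' - p) : ℝ)| := abs_sub _ _
        _ ≤ 2 * ‖p' - p‖ := by linarith
    have hdiff : |(∫ x, quantileLoss ξ x p' ∂μ) - ∫ x, quantileLoss ξ x p ∂μ|
        ≤ 2 * dist p' p := by
      rw [← integral_sub (hQL _ _) (hQL _ _)]
      have h1 : |∫ x, (quantileLoss ξ x p' - quantileLoss ξ x p) ∂μ|
          ≤ ∫ x, |quantileLoss ξ x p' - quantileLoss ξ x p| ∂μ := by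
        have := norm_integral_le_integral_norm
          (fun x => quantileLoss ξ x p' - quantileLoss ξ x p) (μ := μ)
        simpa [Real.norm_eq_abs] using this
      refine h1.trans ?_
      calc ∫ x, |quantileLoss ξ x p' - quantileLoss ξ x p| ∂μ
          ≤ ∫ _x, 2 * dist p' p ∂μ :=
            integral_mono ((hQL _ _).sub (hQL _ _)).abs (integrable_const _) hpt
        _ = 2 * dist p' p := hIconst _
    rw [Real.dist_eq]
    calc |(∫ x, quantileLoss ξ x p' ∂μ) - ∫ x, quantileLoss ξ x p ∂μ|
        ≤ 2 * dist p' p := hdiff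
      _ < ε := by
        have := dist_nonneg (x := p') (y := p)
        linarith
  have hdiv : Tendsto (fun m => ‖q m‖) atTop atTop := by
    rw [tendsto_atTop]
    intro R
    set R₁ : ℝ := max R 1 with hR₁
    have hR₁pos : 0 < R₁ := lt_of_lt_of_le one_pos (le_max_right _ _)
    obtain ⟨pstar, hpmem, hpmin⟩ :=
      (isCompact_closedBall (0 : EuclideanSpace ℝ (Fin n)) R₁).exists_isMinOn
        ⟨0, Metric.mem_closedBall_self hR₁pos.le⟩ hGcont.continuousOn
    set c : ℝ := ∫ x, quantileLoss ξ x pstar ∂μ with hcdef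
    have hcpos : 0 < c := hpos pstar
    obtain ⟨k, hk⟩ : ∃ k : ℕ, ∫ x, quantileLoss ξ x ((k : ℝ) • ξ) ∂μ < c / 2 :=
      (hnull.eventually_lt_const (by linarith)).exists
    have he1 : ∀ᶠ m in atTop, (1 - β m) * (R₁ + M) < c / 8 := by
      have h : Tendsto (fun m => (1 - β m) * (R₁ + M)) atTop (𝓝 0) := by
        have h0 : Tendsto (fun m => 1 - β m) atTop (𝓝 0) := by
          have := hβlim.const_sub 1
          simpa using this
        simpa using h0.mul_const (R₁ + M)
      exact h.eventually_lt_const (by linarith)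
    have he2 : ∀ᶠ m in atTop, (1 - β m) * ((k : ℝ) + M) < c / 8 := by
      have h : Tendsto (fun m => (1 - β m) * ((k : ℝ) + M)) atTop (𝓝 0) := by
        have h0 : Tendsto (fun m => 1 - β m) atTop (𝓝 0) := by
          have := hβlim.const_sub 1
          simpa using this
        simpa using h0.mul_const _
      exact h.eventually_lt_const (by linarith)
    filter_upwards [he1, he2] with m h1 h2
    by_contra hcon
    push_neg at hcon
    have hqR : q m ∈ Metric.closedBall (0 : EuclideanSpace ℝ (Fin n)) R₁ := by
      rw [Metric.mem_closedBall, dist_zero_right]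
      exact le_trans hcon.le (le_max_left _ _)
    have hbm := hβ m
    obtain ⟨hb0, hb1⟩ := hbm
    -- chain of inequalities
    have hA : c ≤ ∫ x, quantileLoss ξ x (q m) ∂μ := hpmin hqR
    have hB := htrans (β m) hb0 hb1.le (q m)
    have hC := hq m ((k : ℝ) • ξ)
    have hD := htrans (β m) hb0 hb1.le ((k : ℝ) • ξ)
    have hnormk : ‖(k : ℝ) • ξ‖ = (k : ℝ) := by
      rw [norm_smul, Real.norm_eq_abs, abs_of_nonneg (Nat.cast_nonneg k), hξ, mul_one]
    rw [hnormk] at hD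
    have hqmnorm : ‖q m‖ ≤ R₁ := by
      rw [Metric.mem_closedBall, dist_zero_right] at hqR
      exact hqR
    rw [abs_le] at hB hD
    have hB' : ∫ x, quantileLoss ξ x (q m) ∂μ
        ≤ (∫ x, quantileLoss (β m • ξ) x (q m) ∂μ) + (1 - β m) * (‖q m‖ + M) := by
      linarith [hB.1]
    have hmul : (1 - β m) * (‖q m‖ + M) ≤ (1 - β m) * (R₁ + M) := by
      apply mul_le_mul_of_nonneg_left (by linarith) (by linarith)
    have hD' : ∫ x, quantileLoss (β m • ξ) x ((k : ℝ) • ξ) ∂μ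
        ≤ (∫ x, quantileLoss ξ x ((k : ℝ) • ξ) ∂μ) + (1 - β m) * ((k : ℝ) + M) := by
      linarith [hD.2]
    linarith
  -- Final direction argument
  have hβhalf : ∀ᶠ m in atTop, (1 : ℝ) / 2 ≤ β m := by
    have := hβlim.eventually_const_lt (by norm_num : (1:ℝ)/2 < 1)
    filter_upwards [this] with m hm using hm.le
  have hqbig : ∀ᶠ m in atTop, (1 : ℝ) ≤ ‖q m‖ := hdiv.eventually_ge_atTop 1
  have hkey : ∀ᶠ m in atTop,
      ‖(‖q m‖⁻¹ • q m) - ξ‖ ^ 2 ≤ 16 * M / ‖q m‖ := by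
    filter_upwards [hβhalf, hqbig] with m hbm hqm
    have hqn : (0 : ℝ) < ‖q m‖ := by linarith
    have hq0 : q m ≠ 0 := by
      intro h
      rw [h, norm_zero] at hqn
      exact lt_irrefl _ hqn
    obtain ⟨hb0, hb1⟩ := hβ m
    set w : EuclideanSpace ℝ (Fin n) := ‖q m‖⁻¹ • q m with hwdef
    have hwn : ‖w‖ = 1 := by
      rw [hwdef, norm_smul, norm_inv, norm_norm, inv_mul_cancel₀ (ne_of_gt hqn)]
    have hL := hlow (β m) hb0 hb1.le (q m) hq0
    have hU := hup (β m) hb0 hb1.le ‖q m‖ hqn.le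
    have hQ := hq m (‖q m‖ • ξ)
    have hiw : (inner ℝ ξ w : ℝ) ≤ 1 := by
      have := real_inner_le_norm ξ w
      rwa [hξ, hwn, one_mul] at this
    -- ‖q‖ * β * (1 - ⟪ξ,w⟫) ≤ 4M
    have hmain : ‖q m‖ * (β m * (1 - (inner ℝ ξ w : ℝ))) ≤ 4 * M := by
      nlinarith [hL, hU, hQ]
    have h8 : 1 - (inner ℝ ξ w : ℝ) ≤ 8 * M / ‖q m‖ := by
      rw [le_div_iff₀ hqn]
      have hb2 : β m * (1 - (inner ℝ ξ w : ℝ)) ≥ (1/2) * (1 - (inner ℝ ξ w : ℝ)) := by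
        apply mul_le_mul_of_nonneg_right hbm (by linarith)
      nlinarith [hmain]
    have hsq : ‖w - ξ‖ ^ 2 = 2 - 2 * (inner ℝ ξ w : ℝ) := by
      rw [norm_sub_sq_real, hwn, hξ, real_inner_comm]
      ring
    rw [hsq]
    rw [div_eq_mul_inv] at h8 ⊢
    nlinarith [h8]
  have hlim : Tendsto (fun m => ‖(‖q m‖⁻¹ • q m) - ξ‖ ^ 2) atTop (𝓝 0) := by
    refine squeeze_zero' (Filter.Eventually.of_forall fun m => sq_nonneg _) hkey ?_
    have hden : Tendsto (fun m => ‖q m‖) atTop atTop := hdiv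
    exact Tendsto.div_atTop tendsto_const_nhds hden
  have hnorm : Tendsto (fun m => ‖(‖q m‖⁻¹ • q m) - ξ‖) atTop (𝓝 0) := by
    have h := (Real.continuous_sqrt.tendsto 0).comp hlim
    rw [Real.sqrt_zero] at h
    refine h.congr fun m => ?_
    simp [Real.sqrt_sq_eq_abs, abs_norm, Function.comp]
  rw [tendsto_iff_norm_sub_tendsto_zero]
  exact hnorm
end

section
/- Let E = EuclideanSpace ℝ (Fin n), N ≥ 1, x : Fin N → E a sample, u ∈ E with β := ‖u‖ < 1, and y ∈ E. Then every minimizer q of the empirical loss p ↦ (1/N) ∑_i ρ_u(x_i, p) satisfies ‖q − y‖ ≤ ((1 + β)/(1 − β)) · (1/N) ∑_i ‖x_i − y‖ + max_i ‖x_i − y‖. (Euclidean case of the sample-quantile localization bound established in the proof of Theorem 5.2: all sample u-quantiles lie in an explicit ball determined by the data.) -/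
open MeasureTheory Filter Topology

lemma quantileLoss_lower {n : ℕ} (u x p : EuclideanSpace ℝ (Fin n)) :
    (1 - ‖u‖) * ‖p - x‖ ≤ quantileLoss u x p := by
  have h := real_inner_le_norm u (p - x)
  unfold quantileLoss
  nlinarith [norm_nonneg (p - x)]

lemma quantileLoss_upper {n : ℕ} (u x p : EuclideanSpace ℝ (Fin n)) :
    quantileLoss u x p ≤ (1 + ‖u‖) * ‖p - x‖ := by
  have h := real_inner_le_norm u (p - x)
  have h2 := abs_real_inner_le_norm u (p - x)
  have h3 : -(‖u‖ * ‖p - x‖) ≤ inner ℝ u (p - x) := by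
    have := abs_le.mp h2; linarith [this.1]
  unfold quantileLoss
  linarith

/-- Euclidean case of the sample-quantile localization bound from the proof of
Theorem 5.2: every sample `u`-quantile `q` satisfies
`‖q − y‖ ≤ ((1 + β)/(1 − β)) · (1/N) ∑ᵢ ‖xᵢ − y‖ + maxᵢ ‖xᵢ − y‖` with `β = ‖u‖`. -/
theorem sample_quantile_localization
    {n : ℕ} (N : ℕ) [NeZero N]
    (x : Fin N → EuclideanSpace ℝ (Fin n))
    (u : EuclideanSpace ℝ (Fin n)) (hu : ‖u‖ < 1)
    (y : EuclideanSpace ℝ (Fin n))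
    (q : EuclideanSpace ℝ (Fin n))
    (hq : ∀ p : EuclideanSpace ℝ (Fin n),
      (N : ℝ)⁻¹ * ∑ i, quantileLoss u (x i) q ≤ (N : ℝ)⁻¹ * ∑ i, quantileLoss u (x i) p) :
    ‖q - y‖ ≤ ((1 + ‖u‖) / (1 - ‖u‖)) * ((N : ℝ)⁻¹ * ∑ i, ‖x i - y‖)
      + ⨆ i, ‖x i - y‖ := by
  set β := ‖u‖ with hβ
  have hβ0 : 0 ≤ β := norm_nonneg u
  have h1β : 0 < 1 - β := by linarith
  have hN : (0:ℝ) < N := by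
    exact_mod_cast Nat.pos_of_ne_zero (NeZero.ne N)
  have hNinv : (0:ℝ) < (N:ℝ)⁻¹ := inv_pos.mpr hN
  set A : ℝ := (N : ℝ)⁻¹ * ∑ i, ‖x i - y‖ with hA
  -- sup bound
  have hsup : ∀ i, ‖x i - y‖ ≤ ⨆ j, ‖x j - y‖ := fun i =>
    le_ciSup (f := fun j => ‖x j - y‖) (Finite.bddAbove_range _) i
  -- loss comparison at y
  have hqy := hq y
  have hsum : ∑ i, quantileLoss u (x i) q ≤ ∑ i, quantileLoss u (x i) y :=
    le_of_mul_le_mul_left (by simpa [mul_comm] using hqy) hNinv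
  have hlow : (1 - β) * ∑ i, ‖q - x i‖ ≤ ∑ i, quantileLoss u (x i) q := by
    rw [Finset.mul_sum]
    exact Finset.sum_le_sum fun i _ => quantileLoss_lower u (x i) q
  have hup : ∑ i, quantileLoss u (x i) y ≤ (1 + β) * ∑ i, ‖x i - y‖ := by
    rw [Finset.mul_sum]
    refine Finset.sum_le_sum fun i _ => ?_
    simpa [norm_sub_rev] using quantileLoss_upper u (x i) y
  have hkey : (1 - β) * ∑ i, ‖q - x i‖ ≤ (1 + β) * ∑ i, ‖x i - y‖ := by
    linarith
  -- triangle: N * ‖q - y‖ ≤ ∑ ‖q - x i‖ + ∑ ‖x i - y‖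
  have htri : (N:ℝ) * ‖q - y‖ ≤ (∑ i, ‖q - x i‖) + ∑ i, ‖x i - y‖ := by
    have : ∀ i : Fin N, ‖q - y‖ ≤ ‖q - x i‖ + ‖x i - y‖ := fun i => by
      simpa using norm_sub_le_norm_sub_add_norm_sub q (x i) y
    calc (N:ℝ) * ‖q - y‖ = ∑ _i : Fin N, ‖q - y‖ := by
          simp [Finset.sum_const, mul_comm]
      _ ≤ ∑ i, (‖q - x i‖ + ‖x i - y‖) := Finset.sum_le_sum fun i _ => this i
      _ = _ := Finset.sum_add_distrib
  -- combine
  have hS : ∑ i, ‖q - x i‖ ≤ ((1 + β) / (1 - β)) * ∑ i, ‖x i - y‖ := by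
    rw [div_mul_eq_mul_div, le_div_iff₀ h1β]
    nlinarith
  have hA_le_sup : A ≤ ⨆ j, ‖x j - y‖ := by
    rw [hA, inv_mul_le_iff₀ hN]
    calc ∑ i, ‖x i - y‖ ≤ ∑ _i : Fin N, ⨆ j, ‖x j - y‖ :=
          Finset.sum_le_sum fun i _ => hsup i
      _ = (N:ℝ) * ⨆ j, ‖x j - y‖ := by simp [Finset.sum_const, mul_comm]
  have : ‖q - y‖ ≤ ((1 + β) / (1 - β)) * A + A := by
    rw [hA]
    rw [← mul_le_mul_iff_right₀ hN]
    have hdiv : (0:ℝ) ≤ (1 + β) / (1 - β) := div_nonneg (by linarith) h1β.le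
    have : (N:ℝ) * ((1 + β) / (1 - β) * ((N:ℝ)⁻¹ * ∑ i, ‖x i - y‖) + (N:ℝ)⁻¹ * ∑ i, ‖x i - y‖)
        = (1 + β) / (1 - β) * ∑ i, ‖x i - y‖ + ∑ i, ‖x i - y‖ := by
      field_simp
    rw [this]
    nlinarith
  linarith
end

section
/- Let E = EuclideanSpace ℝ (Fin n) with n ≥ 1, N ≥ 1, u ∈ E with β := ‖u‖ < 1, and let N'' be a natural number with N'' ≤ N and N'' > (1 − β)N/2. Let T : (Fin N → E) → E be any sample u-quantile function, i.e., for every sample z : Fin N → E, T(z) is a minimizer of the empirical loss p ↦ (1/N) ∑_i ρ_u(z_i, p). Then for every sample X : Fin N → E and every C > 0 there exists a sample Y : Fin N → E with card {i : Y_i ≠ X_i} ≤ N'' and ‖T(X) − T(Y)‖ > C. (Euclidean content of Theorem 5.1(a)–(b), upper bound: corrupting any number of points exceeding (1 − β)N/2 breaks down every sample u-quantile function; combined with the lower bound this determines the breakdown point ⌈(1 − β)N/2⌉/N when (1 − β)N/2 ∉ ℤ.) -/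
open MeasureTheory Filter Topology

lemma ql_nonneg {n : ℕ} {u : EuclideanSpace ℝ (Fin n)} (hu : ‖u‖ ≤ 1)
    (x p : EuclideanSpace ℝ (Fin n)) : 0 ≤ quantileLoss u x p := by
  have h1 : (inner ℝ u (p - x) : ℝ) ≤ ‖u‖ * ‖p - x‖ := real_inner_le_norm u (p - x)
  have h2 : (0:ℝ) ≤ ‖p - x‖ := norm_nonneg _
  unfold quantileLoss
  nlinarith

lemma ql_self {n : ℕ} (u x : EuclideanSpace ℝ (Fin n)) : quantileLoss u x x = 0 := by
  simp [quantileLoss]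

lemma ql_corrupt {n : ℕ} {u v : EuclideanSpace ℝ (Fin n)} (hv : ‖v‖ = 1)
    (hvu : (inner ℝ u v : ℝ) = ‖u‖) {M : ℝ} (hM : 0 ≤ M) (p : EuclideanSpace ℝ (Fin n)) :
    (1 + ‖u‖) * (M - ‖p‖) ≤ quantileLoss u (M • v) p := by
  have h1 : (inner ℝ u (p - M • v) : ℝ) = inner ℝ u p - M * ‖u‖ := by
    rw [inner_sub_right, real_inner_smul_right, hvu]
  have h2 : (inner ℝ u p : ℝ) ≤ ‖u‖ * ‖p‖ := real_inner_le_norm u p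
  have h3 : ‖M • v‖ - ‖p‖ ≤ ‖p - M • v‖ := by
    have := norm_sub_norm_le (M • v) p
    have := norm_sub_rev (M • v) p
    linarith
  have h4 : ‖M • v‖ = M := by rw [norm_smul, hv, Real.norm_eq_abs, abs_of_nonneg hM, mul_one]
  have h5 : (0:ℝ) ≤ ‖u‖ := norm_nonneg u
  unfold quantileLoss
  rw [h1]
  nlinarith [norm_nonneg p]

lemma ql_far {n : ℕ} {u v : EuclideanSpace ℝ (Fin n)} (hv : ‖v‖ = 1)
    (hvu : (inner ℝ u v : ℝ) = ‖u‖) {M : ℝ} (hM : 0 ≤ M) (x : EuclideanSpace ℝ (Fin n)) :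
    quantileLoss u x (M • v) ≤ (1 - ‖u‖) * M + (1 + ‖u‖) * ‖x‖ := by
  have h1 : (inner ℝ u (M • v - x) : ℝ) = M * ‖u‖ - inner ℝ u x := by
    rw [inner_sub_right, real_inner_smul_right, hvu]
  have h2 : (inner ℝ u x : ℝ) ≤ ‖u‖ * ‖x‖ := real_inner_le_norm u x
  have h2' : -(‖u‖ * ‖x‖) ≤ (inner ℝ u x : ℝ) := by
    have h := real_inner_le_norm u (-x)
    rw [inner_neg_right, norm_neg] at h
    linarith
  have h4 : ‖M • v‖ = M := by rw [norm_smul, hv, Real.norm_eq_abs, abs_of_nonneg hM, mul_one]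
  have h3 : ‖M • v - x‖ ≤ M + ‖x‖ := by
    have := norm_sub_le (M • v) x
    linarith
  unfold quantileLoss
  rw [h1]
  linarith

/-- Euclidean content of Theorem 5.1(a)–(b), upper bound: if `N'' > (1 − β)N/2` points
may be corrupted, then every sample `u`-quantile function breaks down: at every sample
the corrupted quantile can be moved arbitrarily far. -/
theorem sample_quantile_breakdown_upper_bound
    {n : ℕ} (hn : 1 ≤ n) (N : ℕ) (hN : 1 ≤ N)
    (u : EuclideanSpace ℝ (Fin n)) (β : ℝ) (hβ : β = ‖u‖) (hu : β < 1)
    (N'' : ℕ) (hN''le : N'' ≤ N) (hN''gt : (1 - β) * N / 2 < (N'' : ℝ))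
    (T : (Fin N → EuclideanSpace ℝ (Fin n)) → EuclideanSpace ℝ (Fin n))
    (hT : ∀ z : Fin N → EuclideanSpace ℝ (Fin n), ∀ p : EuclideanSpace ℝ (Fin n),
      (N : ℝ)⁻¹ * ∑ i, quantileLoss u (z i) (T z)
        ≤ (N : ℝ)⁻¹ * ∑ i, quantileLoss u (z i) p) :
    ∀ X : Fin N → EuclideanSpace ℝ (Fin n), ∀ C : ℝ, 0 < C →
      ∃ Y : Fin N → EuclideanSpace ℝ (Fin n),
        Set.ncard {i : Fin N | Y i ≠ X i} ≤ N'' ∧ C < ‖T X - T Y‖ := by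
  intro X C hC
  have hβ0 : 0 ≤ β := hβ ▸ norm_nonneg u
  have hu1 : ‖u‖ ≤ 1 := by rw [← hβ]; linarith
  obtain ⟨v, hv1, hvu⟩ : ∃ v : EuclideanSpace ℝ (Fin n), ‖v‖ = 1 ∧ (inner ℝ u v : ℝ) = ‖u‖ := by
    rcases eq_or_ne u 0 with h0 | h0
    · refine ⟨EuclideanSpace.single ⟨0, hn⟩ 1, ?_, ?_⟩
      · rw [EuclideanSpace.norm_single]; norm_num
      · simp [h0]
    · refine ⟨‖u‖⁻¹ • u, ?_, ?_⟩
      · rw [norm_smul, Real.norm_eq_abs, abs_of_nonneg (by positivity),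
          inv_mul_cancel₀ (norm_ne_zero_iff.mpr h0)]
      · rw [real_inner_smul_right, real_inner_self_eq_norm_sq, sq, ← mul_assoc,
          inv_mul_cancel₀ (norm_ne_zero_iff.mpr h0), one_mul]
  have hN1 : (1:ℝ) ≤ (N:ℝ) := by exact_mod_cast hN
  set R : ℝ := ∑ i, ‖X i‖ with hR
  have hR0 : 0 ≤ R := Finset.sum_nonneg fun i _ => norm_nonneg _
  set K : ℝ := ‖T X‖ + C with hK
  have hK0 : 0 < K := by have := norm_nonneg (T X); linarith
  set δ : ℝ := 2 * N'' - (1 - β) * N with hδdef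
  have hδ : 0 < δ := by rw [hδdef]; linarith
  have hN''pos : 0 < (N'':ℝ) := by nlinarith
  set M : ℝ := ((1 + β) * N'' * (K + 1) + (1 + β) * R) / δ with hMdef
  have hMδ : M * δ = (1 + β) * N'' * (K + 1) + (1 + β) * R := by
    rw [hMdef]; field_simp
  have hM0 : 0 ≤ M := by
    apply div_nonneg _ hδ.le
    have : 0 < (1 + β) * N'' * (K + 1) := by positivity
    nlinarith
  set Y : Fin N → EuclideanSpace ℝ (Fin n) :=
    fun i => if (i:ℕ) < N'' then M • v else X i with hY
  set S : Finset (Fin N) := Finset.univ.filter (fun i : Fin N => (i:ℕ) < N'') with hS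
  have hScard : S.card = N'' := by
    rw [hS, show (Finset.univ.filter (fun i : Fin N => (i:ℕ) < N'')) =
        Finset.map ⟨Fin.castLE hN''le, Fin.castLE_injective hN''le⟩ Finset.univ from ?_]
    · simp
    · ext i
      simp only [Finset.mem_filter, Finset.mem_univ, true_and, Finset.mem_map,
        Function.Embedding.coeFn_mk]
      constructor
      · intro hi; exact ⟨⟨i.val, hi⟩, Fin.ext rfl⟩
      · rintro ⟨j, rfl⟩; exact j.isLt
  clear_value R K δ M Y S
  refine ⟨Y, ?_, ?_⟩
  · have hsub : {i : Fin N | Y i ≠ X i} ⊆ ↑S := by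
      intro i hi
      simp only [Set.mem_setOf_eq, hY] at hi
      simp only [hS, Finset.coe_filter, Finset.mem_univ, true_and, Set.mem_setOf_eq]
      by_contra h
      exact hi (if_neg h)
    calc Set.ncard {i : Fin N | Y i ≠ X i} ≤ Set.ncard (↑S : Set (Fin N)) :=
          Set.ncard_le_ncard hsub S.finite_toSet
      _ = S.card := Set.ncard_coe_finset S
      _ = N'' := hScard
  · -- main estimate
    have key := hT Y (M • v)
    have hNinv : 0 < (N:ℝ)⁻¹ := by positivity
    have key2 : ∑ i, quantileLoss u (Y i) (T Y) ≤ ∑ i, quantileLoss u (Y i) (M • v) :=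
      le_of_mul_le_mul_left key hNinv
    have hsum : ∀ p : EuclideanSpace ℝ (Fin n), ∑ i, quantileLoss u (Y i) p
        = (N'' : ℝ) * quantileLoss u (M • v) p
          + ∑ i ∈ Finset.univ.filter (fun i : Fin N => ¬ (i:ℕ) < N''),
              quantileLoss u (X i) p := by
      intro p
      rw [← Finset.sum_filter_add_sum_filter_not Finset.univ (fun i : Fin N => (i:ℕ) < N'')
        (fun i => quantileLoss u (Y i) p)]
      congr 1
      · have hScard' : (Finset.univ.filter (fun i : Fin N => (i:ℕ) < N'')).card = N'' := by
          rw [← hS]; exact hScard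
        calc ∑ i ∈ Finset.univ.filter (fun i : Fin N => (i:ℕ) < N''), quantileLoss u (Y i) p
            = ∑ i ∈ Finset.univ.filter (fun i : Fin N => (i:ℕ) < N''), quantileLoss u (M • v) p :=
              Finset.sum_congr rfl fun i hi => by
                have h : (i:ℕ) < N'' := (Finset.mem_filter.mp hi).2
                simp only [hY]; rw [if_pos h]
          _ = (N'' : ℝ) * quantileLoss u (M • v) p := by
              rw [Finset.sum_const, hScard', nsmul_eq_mul]
      · refine Finset.sum_congr rfl fun i hi => ?_
        have h : ¬ (i:ℕ) < N'' := (Finset.mem_filter.mp hi).2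
        simp only [hY]; rw [if_neg h]
    have hcardc : ((Finset.univ.filter (fun i : Fin N => ¬ (i:ℕ) < N'')).card : ℝ)
        = (N:ℝ) - N'' := by
      have h := Finset.card_filter_add_card_filter_not
        (s := (Finset.univ : Finset (Fin N))) (p := fun i : Fin N => (i:ℕ) < N'')
      rw [Finset.card_univ, Fintype.card_fin] at h
      have h2 : (Finset.univ.filter (fun i : Fin N => (i:ℕ) < N'')).card = N'' := by
        rw [← hS]; exact hScard
      have h3 : (Finset.univ.filter (fun i : Fin N => ¬ (i:ℕ) < N'')).card = N - N'' := by omega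
      rw [h3, Nat.cast_sub hN''le]
    -- lower bound for LHS
    have hL : (N'':ℝ) * ((1 + ‖u‖) * (M - ‖T Y‖)) ≤ ∑ i, quantileLoss u (Y i) (T Y) := by
      rw [hsum]
      have h1 : (N'':ℝ) * ((1 + ‖u‖) * (M - ‖T Y‖)) ≤ (N'':ℝ) * quantileLoss u (M • v) (T Y) :=
        mul_le_mul_of_nonneg_left (ql_corrupt hv1 hvu hM0 _) hN''pos.le
      have h2 : 0 ≤ ∑ i ∈ Finset.univ.filter (fun i : Fin N => ¬ (i:ℕ) < N''),
          quantileLoss u (X i) (T Y) :=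
        Finset.sum_nonneg fun i _ => ql_nonneg hu1 _ _
      linarith
    -- upper bound for RHS
    have hU : ∑ i, quantileLoss u (Y i) (M • v)
        ≤ ((N:ℝ) - N'') * ((1 - ‖u‖) * M) + (1 + ‖u‖) * R := by
      rw [hsum, ql_self, mul_zero, zero_add]
      calc ∑ i ∈ Finset.univ.filter (fun i : Fin N => ¬ (i:ℕ) < N''),
            quantileLoss u (X i) (M • v)
          ≤ ∑ i ∈ Finset.univ.filter (fun i : Fin N => ¬ (i:ℕ) < N''),
            ((1 - ‖u‖) * M + (1 + ‖u‖) * ‖X i‖) :=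
            Finset.sum_le_sum fun i _ => ql_far hv1 hvu hM0 _
        _ = ((Finset.univ.filter (fun i : Fin N => ¬ (i:ℕ) < N'')).card : ℝ) * ((1 - ‖u‖) * M)
            + (1 + ‖u‖) * ∑ i ∈ Finset.univ.filter (fun i : Fin N => ¬ (i:ℕ) < N''), ‖X i‖ := by
            rw [Finset.sum_add_distrib, Finset.sum_const, nsmul_eq_mul, Finset.mul_sum]
        _ ≤ ((N:ℝ) - N'') * ((1 - ‖u‖) * M) + (1 + ‖u‖) * R := by
            rw [hcardc]
            have hsub : ∑ i ∈ Finset.univ.filter (fun i : Fin N => ¬ (i:ℕ) < N''), ‖X i‖ ≤ R := by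
              rw [hR]
              exact Finset.sum_le_sum_of_subset_of_nonneg (Finset.filter_subset _ _)
                (fun i _ _ => norm_nonneg _)
            have h1u : (0:ℝ) ≤ 1 + ‖u‖ := by positivity
            nlinarith
    have hchain : (N'':ℝ) * ((1 + β) * (M - ‖T Y‖)) ≤ ((N:ℝ) - N'') * ((1 - β) * M) + (1 + β) * R := by
      rw [hβ]; linarith
    have hfin : (N'':ℝ) * (1 + β) * (K + 1) ≤ (N'':ℝ) * (1 + β) * ‖T Y‖ := by
      rw [hδdef] at hMδ
      linarith [hchain, hMδ]
    have hTY : K + 1 ≤ ‖T Y‖ := by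
      have hpos : 0 < (N'':ℝ) * (1 + β) := mul_pos hN''pos (by linarith)
      calc K + 1 = ((N'':ℝ) * (1 + β) * (K + 1)) / ((N'':ℝ) * (1 + β)) := by field_simp
        _ ≤ ((N'':ℝ) * (1 + β) * ‖T Y‖) / ((N'':ℝ) * (1 + β)) :=
            div_le_div_of_nonneg_right hfin hpos.le
        _ = ‖T Y‖ := by field_simp
    have h6 : ‖T Y‖ - ‖T X‖ ≤ ‖T X - T Y‖ := by
      have h := norm_sub_norm_le (T Y) (T X)
      rw [norm_sub_rev] at h
      linarith
    rw [hK] at hTY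
    linarith
end

section
/- Let E = EuclideanSpace ℝ (Fin n), N ≥ 1, β ∈ [0, 1), K ≥ 1, and let ξ_1, …, ξ_K ∈ E be unit vectors. Let q̂_k, p̂_k : (Fin N → E) → E (k = 1, …, K) be any functions such that for every sample z : Fin N → E, q̂_k(z) is a minimizer of the empirical loss with parameter u = β • ξ_k and p̂_k(z) is a minimizer of the empirical loss with parameter u = −β • ξ_k. Define the dispersion estimators δ̂₁(z) = max_{k} ‖q̂_k(z) − p̂_k(z)‖ and δ̂₂(z) = (1/K) ∑_{k} ‖q̂_k(z) − p̂_k(z)‖. Then for every sample X : Fin N → E there exists C < ∞ such that for every sample Y differing from X in at most ⌈(1 − β)N/2⌉ − 1 coordinates, δ̂₁(Y) ≤ C and δ̂₂(Y) ≤ C; consequently the breakdown points of δ̂₁ and δ̂₂ at every sample are at least ⌈(1 − β)N/2⌉/N. (Euclidean case of Theorem 5.2: robustness of quantile-based dispersion measures.) -/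
open MeasureTheory Filter Topology

section helpers
variable {n : ℕ}

local notation "E" => EuclideanSpace ℝ (Fin n)

lemma ql_lip {β : ℝ} {u : E} (hu : ‖u‖ ≤ β) (x q p : E) :
    -((1 + β) * ‖q - p‖) ≤ quantileLoss u x q - quantileLoss u x p := by
  unfold quantileLoss
  have h1 : |‖q - x‖ - ‖p - x‖| ≤ ‖q - p‖ := by
    have := abs_norm_sub_norm_le (q - x) (p - x)
    simpa [sub_sub_sub_cancel_right] using this
  have h2 : (inner ℝ u (q - x) : ℝ) - inner ℝ u (p - x) = inner ℝ u (q - p) := by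
    rw [← inner_sub_right]; congr 1; abel
  have h3 : |(inner ℝ u (q - p) : ℝ)| ≤ ‖u‖ * ‖q - p‖ := abs_real_inner_le_norm u (q - p)
  have h4 : ‖u‖ * ‖q - p‖ ≤ β * ‖q - p‖ :=
    mul_le_mul_of_nonneg_right hu (norm_nonneg _)
  have h5 := abs_le.mp h1
  have h6 := abs_le.mp h3
  nlinarith [h5.1, h6.2, h6.1]

lemma ql_good {β : ℝ} {u : E} (hu : ‖u‖ ≤ β) (hβ1 : β ≤ 1) (x q p : E) :
    (1 - β) * ‖q - p‖ - 2 * ‖p - x‖ ≤ quantileLoss u x q - quantileLoss u x p := by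
  unfold quantileLoss
  have h1 : (inner ℝ u (q - x) : ℝ) ≤ β * ‖q - x‖ := by
    calc (inner ℝ u (q - x) : ℝ) ≤ ‖u‖ * ‖q - x‖ := real_inner_le_norm u _
    _ ≤ β * ‖q - x‖ := mul_le_mul_of_nonneg_right hu (norm_nonneg _)
  have h2 : -(β * ‖p - x‖) ≤ (inner ℝ u (p - x) : ℝ) := by
    have := (abs_le.mp (abs_real_inner_le_norm u (p - x))).1
    nlinarith [mul_le_mul_of_nonneg_right hu (norm_nonneg (p - x))]
  have h3 : ‖q - p‖ - ‖p - x‖ ≤ ‖q - x‖ := by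
    have := norm_sub_le (q - x) (p - x)
    have e : (q - x) - (p - x) = q - p := by abel
    rw [e] at this; linarith
  nlinarith [norm_nonneg (q - x), norm_nonneg (p - x)]

open Classical in
/-- Any minimizer `q` of the corrupted empirical loss stays within a bound of `p₀`. -/
lemma min_bound {N : ℕ} {β : ℝ} (hβ1 : β ≤ 1)
    {u : E} (hu : ‖u‖ ≤ β) (X Y : Fin N → E) (q p₀ : E)
    (hq : ∑ i, quantileLoss u (Y i) q ≤ ∑ i, quantileLoss u (Y i) p₀)
    {m : ℝ} (hm : ((Finset.univ.filter (fun i => Y i ≠ X i)).card : ℝ) ≤ m) :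
    ((1 - β) * N - 2 * m) * ‖q - p₀‖ ≤ 2 * ∑ i, ‖p₀ - X i‖ := by
  classical
  set S : Finset (Fin N) := Finset.univ.filter (fun i => Y i ≠ X i) with hS
  set Sc : Finset (Fin N) := Finset.univ.filter (fun i => Y i = X i) with hSc
  set d := ‖q - p₀‖ with hd
  have hd0 : 0 ≤ d := norm_nonneg _
  have hsplit : ∑ i, (quantileLoss u (Y i) q - quantileLoss u (Y i) p₀)
      = ∑ i ∈ S, (quantileLoss u (Y i) q - quantileLoss u (Y i) p₀)
        + ∑ i ∈ Sc, (quantileLoss u (Y i) q - quantileLoss u (Y i) p₀) := by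
    have := (Finset.sum_filter_add_sum_filter_not Finset.univ (fun i => Y i ≠ X i)
      (fun i => quantileLoss u (Y i) q - quantileLoss u (Y i) p₀)).symm
    simpa [hS, hSc, not_not] using this
  have hbad : ∀ i ∈ S, -((1 + β) * d) ≤ quantileLoss u (Y i) q - quantileLoss u (Y i) p₀ :=
    fun i _ => ql_lip hu _ q p₀
  have hgood : ∀ i ∈ Sc, (1 - β) * d - 2 * ‖p₀ - X i‖
      ≤ quantileLoss u (Y i) q - quantileLoss u (Y i) p₀ := by
    intro i hi
    have hYX : Y i = X i := (Finset.mem_filter.mp hi).2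
    rw [hYX]
    exact ql_good hu hβ1 _ q p₀
  have hBsum : (S.card : ℝ) * (-((1 + β) * d))
      ≤ ∑ i ∈ S, (quantileLoss u (Y i) q - quantileLoss u (Y i) p₀) := by
    have := Finset.card_nsmul_le_sum S _ _ hbad
    simpa [nsmul_eq_mul] using this
  have hGsum : ∑ i ∈ Sc, ((1 - β) * d - 2 * ‖p₀ - X i‖)
      ≤ ∑ i ∈ Sc, (quantileLoss u (Y i) q - quantileLoss u (Y i) p₀) :=
    Finset.sum_le_sum hgood
  have hGsum' : ∑ i ∈ Sc, ((1 - β) * d - 2 * ‖p₀ - X i‖)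
      = (Sc.card : ℝ) * ((1 - β) * d) - 2 * ∑ i ∈ Sc, ‖p₀ - X i‖ := by
    rw [Finset.sum_sub_distrib, Finset.sum_const, Finset.mul_sum, nsmul_eq_mul]
  have hcard : S.card + Sc.card = N := by
    have := Finset.card_filter_add_card_filter_not (s := (Finset.univ : Finset (Fin N)))
      (p := fun i => Y i ≠ X i)
    simpa [hS, hSc, not_not] using this
  have hsum0 : ∑ i, (quantileLoss u (Y i) q - quantileLoss u (Y i) p₀) ≤ 0 := by
    rw [Finset.sum_sub_distrib]; linarith
  have hsub : ∑ i ∈ Sc, ‖p₀ - X i‖ ≤ ∑ i, ‖p₀ - X i‖ :=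
    Finset.sum_le_sum_of_subset_of_nonneg (Finset.subset_univ _)
      (fun i _ _ => norm_nonneg _)
  have hScard : (Sc.card : ℝ) = N - S.card := by
    have : (S.card : ℝ) + Sc.card = N := by exact_mod_cast hcard
    linarith
  have key : ((1 - β) * N - 2 * (S.card : ℝ)) * d ≤ 2 * ∑ i, ‖p₀ - X i‖ := by
    rw [hsplit] at hsum0
    rw [hScard] at hGsum'
    nlinarith [hGsum, hBsum, hGsum', hsub]
  have : ((1 - β) * N - 2 * m) * d ≤ ((1 - β) * N - 2 * (S.card : ℝ)) * d := by
    apply mul_le_mul_of_nonneg_right _ hd0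
    linarith
  linarith

end helpers

/-- Euclidean case of Theorem 5.2: the quantile-based dispersion estimators
`δ̂₁(z) = max_k ‖q̂_k(z) − p̂_k(z)‖` and `δ̂₂(z) = (1/K) ∑_k ‖q̂_k(z) − p̂_k(z)‖` remain
bounded under corruption of at most `⌈(1 − β)N/2⌉ − 1` data points; hence their
breakdown points are at least `⌈(1 − β)N/2⌉/N` at every sample. -/
theorem dispersion_estimators_breakdown_lower_bound
    {n : ℕ} (N : ℕ) [NeZero N]
    (β : ℝ) (hβ : β ∈ Set.Ico (0 : ℝ) 1)
    (K : ℕ) [NeZero K]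
    (ξ : Fin K → EuclideanSpace ℝ (Fin n)) (hξ : ∀ k, ‖ξ k‖ = 1)
    (qhat phat : Fin K → (Fin N → EuclideanSpace ℝ (Fin n)) → EuclideanSpace ℝ (Fin n))
    (hqhat : ∀ k, ∀ z : Fin N → EuclideanSpace ℝ (Fin n),
      ∀ p : EuclideanSpace ℝ (Fin n),
        (N : ℝ)⁻¹ * ∑ i, quantileLoss (β • ξ k) (z i) (qhat k z)
          ≤ (N : ℝ)⁻¹ * ∑ i, quantileLoss (β • ξ k) (z i) p)
    (hphat : ∀ k, ∀ z : Fin N → EuclideanSpace ℝ (Fin n),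
      ∀ p : EuclideanSpace ℝ (Fin n),
        (N : ℝ)⁻¹ * ∑ i, quantileLoss (-β • ξ k) (z i) (phat k z)
          ≤ (N : ℝ)⁻¹ * ∑ i, quantileLoss (-β • ξ k) (z i) p)
    (δ₁ δ₂ : (Fin N → EuclideanSpace ℝ (Fin n)) → ℝ)
    (hδ₁ : ∀ z, δ₁ z = ⨆ k, ‖qhat k z - phat k z‖)
    (hδ₂ : ∀ z, δ₂ z = (K : ℝ)⁻¹ * ∑ k, ‖qhat k z - phat k z‖) :
    ∀ X : Fin N → EuclideanSpace ℝ (Fin n), ∃ C : ℝ,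
      ∀ Y : Fin N → EuclideanSpace ℝ (Fin n),
        Set.ncard {i : Fin N | Y i ≠ X i} ≤ ⌈(1 - β) * N / 2⌉₊ - 1 →
        δ₁ Y ≤ C ∧ δ₂ Y ≤ C := by
  classical
  obtain ⟨hβ0, hβ1⟩ := hβ
  intro X
  have hNpos : 0 < N := Nat.pos_of_ne_zero (NeZero.ne N)
  have hKpos : 0 < K := Nat.pos_of_ne_zero (NeZero.ne K)
  have hNpos' : (0 : ℝ) < N := by exact_mod_cast hNpos
  have hKpos' : (0 : ℝ) < K := by exact_mod_cast hKpos
  haveI : Nonempty (Fin K) := ⟨⟨0, hKpos⟩⟩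
  set t : ℝ := (1 - β) * N / 2 with ht
  have htpos : 0 < t := by
    have : 0 < 1 - β := by linarith
    positivity
  set M : ℕ := ⌈t⌉₊ - 1 with hM
  have hceil1 : 1 ≤ ⌈t⌉₊ := Nat.one_le_iff_ne_zero.mpr (Nat.ceil_pos.mpr htpos).ne'
  have hMlt : (M : ℝ) < t := by
    have h1 : ((⌈t⌉₊ : ℕ) : ℝ) < t + 1 := by
      have := Nat.ceil_lt_add_one (le_of_lt htpos)
      exact_mod_cast this
    have h2 : (M : ℝ) = (⌈t⌉₊ : ℝ) - 1 := by
      rw [hM]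
      push_cast [Nat.cast_sub hceil1]
      ring
    linarith
  set p₀ : EuclideanSpace ℝ (Fin n) := X ⟨0, hNpos⟩ with hp₀
  set B : ℝ := 2 * ∑ i, ‖p₀ - X i‖ with hB
  have hB0 : 0 ≤ B := by positivity
  set c₀ : ℝ := (1 - β) * N - 2 * (M : ℝ) with hc₀
  have hc₀pos : 0 < c₀ := by
    rw [hc₀, ht] at *
    linarith [hMlt]
  set R : ℝ := B / c₀ with hR
  have hR0 : 0 ≤ R := div_nonneg hB0 (le_of_lt hc₀pos)
  refine ⟨2 * R, ?_⟩
  intro Y hY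
  -- translate the ncard hypothesis to a Finset.card bound
  have hncard : Set.ncard {i : Fin N | Y i ≠ X i}
      = (Finset.univ.filter (fun i => Y i ≠ X i)).card := by
    rw [Set.ncard_eq_toFinset_card']
    congr 1
    ext i
    simp
  have hcardM : ((Finset.univ.filter (fun i => Y i ≠ X i)).card : ℝ) ≤ (M : ℝ) := by
    have : (Finset.univ.filter (fun i => Y i ≠ X i)).card ≤ M := by
      rw [← hncard]; exact hY
    exact_mod_cast this
  -- norm of the quantile directions
  have hnormq : ∀ k : Fin K, ‖β • ξ k‖ ≤ β := by
    intro k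
    rw [norm_smul, hξ k, Real.norm_eq_abs, abs_of_nonneg hβ0, mul_one]
  have hnormp : ∀ k : Fin K, ‖(-β) • ξ k‖ ≤ β := by
    intro k
    rw [norm_smul, hξ k, Real.norm_eq_abs, abs_neg, abs_of_nonneg hβ0, mul_one]
  -- each estimator is within R of p₀
  have hbound : ∀ (u : EuclideanSpace ℝ (Fin n)) (q : EuclideanSpace ℝ (Fin n)),
      ‖u‖ ≤ β →
      (∑ i, quantileLoss u (Y i) q ≤ ∑ i, quantileLoss u (Y i) p₀) →
      ‖q - p₀‖ ≤ R := by
    intro u q hu hq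
    have hmb := min_bound (le_of_lt hβ1) hu X Y q p₀ hq hcardM
    rw [← hc₀, ← hB] at hmb
    rw [hR, le_div_iff₀ hc₀pos]
    calc ‖q - p₀‖ * c₀ = c₀ * ‖q - p₀‖ := by ring
    _ ≤ B := hmb
  have hqb : ∀ k : Fin K, ‖qhat k Y - p₀‖ ≤ R := by
    intro k
    apply hbound _ _ (hnormq k)
    have := hqhat k Y p₀
    exact le_of_mul_le_mul_left this (inv_pos.mpr hNpos')
  have hpb : ∀ k : Fin K, ‖phat k Y - p₀‖ ≤ R := by
    intro k
    apply hbound _ _ (hnormp k)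
    have := hphat k Y p₀
    exact le_of_mul_le_mul_left this (inv_pos.mpr hNpos')
  have hdiff : ∀ k : Fin K, ‖qhat k Y - phat k Y‖ ≤ 2 * R := by
    intro k
    have e : qhat k Y - phat k Y = (qhat k Y - p₀) - (phat k Y - p₀) := by abel
    rw [e]
    calc ‖(qhat k Y - p₀) - (phat k Y - p₀)‖
        ≤ ‖qhat k Y - p₀‖ + ‖phat k Y - p₀‖ := norm_sub_le _ _
    _ ≤ R + R := add_le_add (hqb k) (hpb k)
    _ = 2 * R := by ring
  constructor
  · rw [hδ₁]
    exact ciSup_le hdiff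
  · rw [hδ₂]
    have hsum : ∑ k, ‖qhat k Y - phat k Y‖ ≤ (K : ℝ) * (2 * R) := by
      have := Finset.sum_le_card_nsmul Finset.univ (fun k => ‖qhat k Y - phat k Y‖)
        (2 * R) (fun k _ => hdiff k)
      simpa [nsmul_eq_mul] using this
    calc (K : ℝ)⁻¹ * ∑ k, ‖qhat k Y - phat k Y‖
        ≤ (K : ℝ)⁻¹ * ((K : ℝ) * (2 * R)) :=
          mul_le_mul_of_nonneg_left hsum (inv_nonneg.mpr (le_of_lt hKpos'))
    _ = 2 * R := by field_simp
end
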